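/- arXiv:1905.11148 — 2 statements merged into one kernel-verified Lean document; each statement's English description precedes it below -/
import Mathlib

section
/- Fix a finite type space with K elements, prior weights p₀ : Fin K → ℝ with p₀ k > 0, and a convex function f : (0,∞) → ℝ with f(1) = 0, extended to 0 by f(0) = lim_{x→0⁺} f(x) (possibly +∞, working in extended reals). For γᵢ : Fin K → ℝ≥0, define h_k(γᵢ) = (∑ₘ γᵢ(m)) · f(γᵢ(k) / (p₀(k) · ∑ₘ γᵢ(m))), with the convention h_k(γᵢ) = 0 when ∑ₘ γᵢ(m) = 0. Then h_k : (Fin K → ℝ≥0) → ℝ≥0∞ is lower semi-continuous. -/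
-- affine-ish lower bound for a convex function with f 1 = 0
lemma hk_aux_bound (f : ℝ → ℝ) (hf : ConvexOn ℝ (Set.Ioi (0 : ℝ)) f) (hf1 : f 1 = 0) :
    ∃ b : ℝ, 0 ≤ b ∧ ∀ x : ℝ, 0 < x → -b * |x - 1| ≤ f x := by
  refine ⟨max |f 2| |2 * f (1/2)|, le_trans (abs_nonneg _) (le_max_left _ _), ?_⟩
  intro x hx
  rcases lt_trichotomy x 1 with h | h | h
  · have hs := hf.slope_mono_adjacent (Set.mem_Ioi.2 hx)
      (Set.mem_Ioi.2 (by norm_num : (0:ℝ) < 2)) h (by norm_num)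
    rw [hf1] at hs
    -- hs : (0 - f x)/(1 - x) ≤ (f 2 - 0)/(2 - 1)
    have h1x : (0:ℝ) < 1 - x := by linarith
    rw [div_le_iff₀ h1x] at hs
    have habs : |x - 1| = 1 - x := by rw [abs_of_nonpos (by linarith)]; ring
    have hb : f 2 ≤ max |f 2| |2 * f (1/2)| := le_trans (le_abs_self _) (le_max_left _ _)
    rw [habs]
    nlinarith [le_max_left |f 2| |2 * f (1/2)|, abs_nonneg (f 2)]
  · simp [h, hf1]
  · have hs := hf.slope_mono_adjacent (Set.mem_Ioi.2 (by norm_num : (0:ℝ) < 1/2))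
      (Set.mem_Ioi.2 hx) (by norm_num) h
    rw [hf1] at hs
    have hx1 : (0:ℝ) < x - 1 := by linarith
    rw [le_div_iff₀ hx1] at hs
    have habs : |x - 1| = x - 1 := abs_of_pos hx1
    have hb : 2 * f (1/2) ≤ max |f 2| |2 * f (1/2)| :=
      le_trans (le_abs_self _) (le_max_right _ _)
    have hs2 : (0 - f (1/2)) / (1 - 1/2) = -(2 * f (1/2)) := by ring
    rw [hs2] at hs
    rw [habs]
    nlinarith

/-- Lower semi-continuity of the per-action privacy-cost term `h_k`. -/
theorem hk_lowerSemicontinuous (K : ℕ) (p₀ : Fin K → ℝ) (hp₀ : ∀ k, 0 < p₀ k)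
    (f : ℝ → ℝ) (hf : ConvexOn ℝ (Set.Ioi (0 : ℝ)) f) (hf1 : f 1 = 0)
    (fext : ℝ → EReal) (hfe : ∀ x : ℝ, 0 < x → fext x = (f x : EReal))
    (hf0 : Filter.Tendsto (fun x : ℝ => (f x : EReal))
      (nhdsWithin 0 (Set.Ioi 0)) (nhds (fext 0)))
    (k : Fin K) :
    LowerSemicontinuous (fun γ : Fin K → NNReal =>
      if (∑ m, (γ m : ℝ)) = 0 then (0 : EReal)
      else ((∑ m, (γ m : ℝ) : ℝ) : EReal) *
        fext ((γ k : ℝ) / (p₀ k * ∑ m, (γ m : ℝ)))) := by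
  obtain ⟨b, hb0, hbf⟩ := hk_aux_bound f hf hf1
  have hfext0 : ((-b : ℝ) : EReal) ≤ fext 0 := by
    refine ge_of_tendsto hf0 ?_
    filter_upwards [Ioo_mem_nhdsGT (one_pos : (0:ℝ) < 1)] with x hx
    have h1 : -b * |x - 1| ≤ f x := hbf x hx.1
    have h2 : |x - 1| ≤ 1 := by
      rw [abs_of_nonpos (by linarith [hx.2])]; linarith [hx.1]
    exact EReal.coe_le_coe_iff.2 (by nlinarith)
  have hScont : Continuous (fun γ : Fin K → NNReal => ∑ m, (γ m : ℝ)) :=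
    continuous_finset_sum _ fun m _ => NNReal.continuous_coe.comp (continuous_apply m)
  have hSnn : ∀ γ : Fin K → NNReal, 0 ≤ ∑ m, (γ m : ℝ) :=
    fun γ => Finset.sum_nonneg fun m _ => (γ m).coe_nonneg
  have hxnn : ∀ γ' : Fin K → NNReal,
      0 ≤ (γ' k : ℝ) / (p₀ k * ∑ m, (γ' m : ℝ)) :=
    fun γ' => div_nonneg (γ' k).coe_nonneg (mul_nonneg (hp₀ k).le (hSnn γ'))
  intro γ
  by_cases hS : (∑ m, (γ m : ℝ)) = 0
  · -- case: total mass zero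
    intro c hc
    have hc0 : c < (0 : EReal) := by simpa [hS] using hc
    obtain ⟨r, hcr, hr0'⟩ := EReal.exists_between_coe_real hc0
    have hr0 : r < 0 := by exact_mod_cast hr0'
    -- the continuous lower bound g
    have hγ0 : ∀ m, (γ m : ℝ) = 0 := by
      intro m
      exact (Finset.sum_eq_zero_iff_of_nonneg
        (fun m _ => (γ m).coe_nonneg)).1 hS m (Finset.mem_univ m)
    have hgcont : Filter.Tendsto
        (fun γ' : Fin K → NNReal => -b * ((γ' k : ℝ) / p₀ k + ∑ m, (γ' m : ℝ)))
        (nhds γ) (nhds 0) := by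
      have hc : Continuous
          (fun γ' : Fin K → NNReal => -b * ((γ' k : ℝ) / p₀ k + ∑ m, (γ' m : ℝ))) := by
        fun_prop
      have := hc.continuousAt (x := γ)
      simpa [ContinuousAt, hγ0, hS] using this
    have hev := hgcont.eventually_const_lt hr0
    filter_upwards [hev] with γ' hgr
    have key : ((-b * ((γ' k : ℝ) / p₀ k + ∑ m, (γ' m : ℝ)) : ℝ) : EReal) ≤
        (if (∑ m, (γ' m : ℝ)) = 0 then (0 : EReal)
          else ((∑ m, (γ' m : ℝ) : ℝ) : EReal) *
            fext ((γ' k : ℝ) / (p₀ k * ∑ m, (γ' m : ℝ)))) := by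
      by_cases hS' : (∑ m, (γ' m : ℝ)) = 0
      · have hγ'k : (γ' k : ℝ) = 0 :=
          (Finset.sum_eq_zero_iff_of_nonneg
            (fun m _ => (γ' m).coe_nonneg)).1 hS' k (Finset.mem_univ k)
        rw [if_pos hS']
        simp [hγ'k, hS']
      · rw [if_neg hS']
        have hS'pos : 0 < ∑ m, (γ' m : ℝ) := (hSnn γ').lt_of_ne (Ne.symm hS')
        by_cases hk' : (γ' k : ℝ) = 0
        · have hx0 : (γ' k : ℝ) / (p₀ k * ∑ m, (γ' m : ℝ)) = 0 := by
            rw [hk', zero_div]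
          rw [hx0]
          have h1 : ((∑ m, (γ' m : ℝ) : ℝ) : EReal) * ((-b : ℝ) : EReal) ≤
              ((∑ m, (γ' m : ℝ) : ℝ) : EReal) * fext 0 :=
            mul_le_mul_of_nonneg_left hfext0 (by exact_mod_cast hSnn γ')
          refine le_trans ?_ h1
          rw [← EReal.coe_mul]
          exact EReal.coe_le_coe_iff.2 (by rw [hk']; ring_nf; rfl)
        · have hk'pos : 0 < (γ' k : ℝ) := (γ' k).coe_nonneg.lt_of_ne (Ne.symm hk')
          have hxpos : 0 < (γ' k : ℝ) / (p₀ k * ∑ m, (γ' m : ℝ)) :=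
            div_pos hk'pos (mul_pos (hp₀ k) hS'pos)
          rw [hfe _ hxpos, ← EReal.coe_mul]
          apply EReal.coe_le_coe_iff.2
          set x' := (γ' k : ℝ) / (p₀ k * ∑ m, (γ' m : ℝ)) with hx'
          set S' := ∑ m, (γ' m : ℝ) with hS'def
          have hfx := hbf x' hxpos
          have hmul : S' * x' = (γ' k : ℝ) / p₀ k := by
            rw [hx']
            field_simp [hS'pos.ne', (hp₀ k).ne']
          have h4 : S' * |x' - 1| ≤ (γ' k : ℝ) / p₀ k + S' := by
            have habs : |x' - 1| ≤ x' + 1 := by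
              calc |x' - 1| ≤ |x'| + |1| := abs_sub x' 1
              _ = x' + 1 := by rw [abs_of_pos hxpos, abs_one]
            have := mul_le_mul_of_nonneg_left habs (hSnn γ')
            nlinarith [this, hmul]
          have h2 : S' * (-b * |x' - 1|) ≤ S' * f x' :=
            mul_le_mul_of_nonneg_left hfx (hSnn γ')
          nlinarith [h2, mul_le_mul_of_nonneg_left h4 hb0]
    exact lt_of_lt_of_le (lt_trans hcr (EReal.coe_lt_coe_iff.2 hgr)) key
  · -- case: positive total mass
    have hSpos : 0 < ∑ m, (γ m : ℝ) := (hSnn γ).lt_of_ne (Ne.symm hS)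
    apply ContinuousAt.lowerSemicontinuousAt
    have hxcont : ContinuousAt
        (fun γ' : Fin K → NNReal => (γ' k : ℝ) / (p₀ k * ∑ m, (γ' m : ℝ))) γ := by
      apply ContinuousAt.div
      · exact (NNReal.continuous_coe.comp (continuous_apply k)).continuousAt
      · exact (continuousAt_const.mul hScont.continuousAt)
      · exact ne_of_gt (mul_pos (hp₀ k) hSpos)
    have hfx : ContinuousAt
        (fun γ' : Fin K → NNReal => fext ((γ' k : ℝ) / (p₀ k * ∑ m, (γ' m : ℝ)))) γ := by
      by_cases hγk : (γ k : ℝ) = 0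
      · have hxval : (γ k : ℝ) / (p₀ k * ∑ m, (γ m : ℝ)) = 0 := by rw [hγk, zero_div]
        have hIoi : Filter.Tendsto fext (nhdsWithin 0 (Set.Ioi 0)) (nhds (fext 0)) :=
          hf0.congr' (eventually_mem_nhdsWithin.mono fun x hx => (hfe x hx).symm)
        have hIci : Filter.Tendsto fext (nhdsWithin 0 (Set.Ici 0)) (nhds (fext 0)) := by
          rw [← Set.Ioi_insert, nhdsWithin_insert]
          exact Filter.tendsto_sup.2 ⟨tendsto_pure_nhds fext 0, hIoi⟩
        have hxto : Filter.Tendsto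
            (fun γ' : Fin K → NNReal => (γ' k : ℝ) / (p₀ k * ∑ m, (γ' m : ℝ)))
            (nhds γ) (nhdsWithin 0 (Set.Ici 0)) := by
          rw [tendsto_nhdsWithin_iff]
          constructor
          · simpa [ContinuousAt, hxval] using hxcont
          · exact Filter.Eventually.of_forall fun γ' => hxnn γ'
        have := hIci.comp hxto
        show Filter.Tendsto _ (nhds γ) (nhds (fext ((γ k : ℝ) / (p₀ k * ∑ m, (γ m : ℝ)))))
        rw [hxval]
        exact this
      · have hxpos : 0 < (γ k : ℝ) / (p₀ k * ∑ m, (γ m : ℝ)) :=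
          div_pos ((γ k).coe_nonneg.lt_of_ne (Ne.symm hγk)) (mul_pos (hp₀ k) hSpos)
        have hfcont : ContinuousAt f ((γ k : ℝ) / (p₀ k * ∑ m, (γ m : ℝ))) :=
          (hf.continuousOn isOpen_Ioi).continuousAt (isOpen_Ioi.mem_nhds hxpos)
        have hcoef : ContinuousAt (fun x : ℝ => (f x : EReal))
            ((γ k : ℝ) / (p₀ k * ∑ m, (γ m : ℝ))) :=
          continuous_coe_real_ereal.continuousAt.comp hfcont
        have hfextc : ContinuousAt fext ((γ k : ℝ) / (p₀ k * ∑ m, (γ m : ℝ))) := by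
          apply hcoef.congr
          filter_upwards [isOpen_Ioi.mem_nhds hxpos] with x hx
          exact (hfe x hx).symm
        exact ContinuousAt.comp (g := fext) hfextc hxcont
    have hprod : ContinuousAt (fun γ' : Fin K → NNReal =>
        ((∑ m, (γ' m : ℝ) : ℝ) : EReal) *
          fext ((γ' k : ℝ) / (p₀ k * ∑ m, (γ' m : ℝ)))) γ := by
      have hpair : ContinuousAt (fun γ' : Fin K → NNReal =>
          (((∑ m, (γ' m : ℝ) : ℝ) : EReal),
            fext ((γ' k : ℝ) / (p₀ k * ∑ m, (γ' m : ℝ))))) γ :=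
        (continuous_coe_real_ereal.continuousAt.comp hScont.continuousAt).prodMk hfx
      have hSne : ((∑ m, (γ m : ℝ) : ℝ) : EReal) ≠ 0 := by
        simp only [ne_eq, EReal.coe_eq_zero]; exact hS
      exact ContinuousAt.comp
        (f := fun γ' : Fin K → NNReal =>
          (((∑ m, (γ' m : ℝ) : ℝ) : EReal),
            fext ((γ' k : ℝ) / (p₀ k * ∑ m, (γ' m : ℝ)))))
        (g := fun p : EReal × EReal => p.1 * p.2)
        (EReal.continuousAt_mul (p := (((∑ m, (γ m : ℝ) : ℝ) : EReal),
            fext ((γ k : ℝ) / (p₀ k * ∑ m, (γ m : ℝ)))))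
          (Or.inl hSne) (Or.inl hSne) (Or.inl (EReal.coe_ne_bot _))
          (Or.inl (EReal.coe_ne_top _))) hpair
    apply hprod.congr
    have hev : ∀ᶠ γ' in nhds γ, 0 < ∑ m, (γ' m : ℝ) :=
      hScont.continuousAt.eventually_const_lt hSpos
    filter_upwards [hev] with γ' hpos
    rw [if_neg hpos.ne']
end

section
/- Let X and Y be finite types, p₀ a probability distribution on Y, and f : (0,∞) → ℝ convex with f(1) = 0, extended by f(0) = lim_{x→0⁺} f(x). For a joint distribution γ on X × Y with second marginal p₀, define the privacy cost C(γ) = ∑_{x ∈ X} ∑_{y ∈ Y} p₀(y) · γ₁(x) · f(γ(x,y) / (γ₁(x) · p₀(y))), where γ₁(x) = ∑_y γ(x,y), with terms equal 0 when γ₁(x) = 0 or p₀(y) = 0. Then C is convex on the set of joint distributions on X × Y whose Y-marginal equals p₀: for γ, μ in this set and t ∈ [0,1], C(tγ + (1-t)μ) ≤ t C(γ) + (1-t) C(μ). -/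
/-- Extend convexity from `Ioi 0` to `Ici 0` using right-continuity at `0`. -/
lemma aux_convexOn_Ici {f : ℝ → ℝ} (hf : ConvexOn ℝ (Set.Ioi (0:ℝ)) f)
    (hf0 : Filter.Tendsto f (nhdsWithin 0 (Set.Ioi 0)) (nhds (f 0))) :
    ConvexOn ℝ (Set.Ici (0:ℝ)) f := by
  have key : ∀ z : ℝ, 0 ≤ z →
      Filter.Tendsto (fun n : ℕ => f (z + 1/(n+1))) Filter.atTop (nhds (f z)) := by
    intro z hz
    have hε : Filter.Tendsto (fun n : ℕ => z + 1/(n+1:ℝ)) Filter.atTop (nhds z) := by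
      simpa using tendsto_const_nhds.add (tendsto_one_div_add_atTop_nhds_zero_nat :
        Filter.Tendsto (fun n : ℕ => 1 / ((n : ℝ) + 1)) Filter.atTop (nhds 0))
    rcases eq_or_lt_of_le hz with h | h
    · subst h
      refine hf0.comp ?_
      apply tendsto_nhdsWithin_of_tendsto_nhds_of_eventually_within _ hε
      filter_upwards with n
      simp only [Set.mem_Ioi, zero_add]
      positivity
    · have hc : ContinuousAt f z :=
        (hf.continuousOn isOpen_Ioi).continuousAt (isOpen_Ioi.mem_nhds h)
      exact hc.tendsto.comp hε
  refine ⟨convex_Ici 0, ?_⟩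
  intro x hx y hy a b ha hb hab
  simp only [smul_eq_mul]
  have hn : ∀ n : ℕ, f (a * x + b * y + 1/(n+1)) ≤
      a * f (x + 1/(n+1)) + b * f (y + 1/(n+1)) := by
    intro n
    have hxn : (x + 1/(n+1:ℝ)) ∈ Set.Ioi (0:ℝ) := by
      simp only [Set.mem_Ioi]; have : (0:ℝ) < 1/(n+1) := by positivity
      have := hx.out; linarith
    have hyn : (y + 1/(n+1:ℝ)) ∈ Set.Ioi (0:ℝ) := by
      simp only [Set.mem_Ioi]; have : (0:ℝ) < 1/(n+1) := by positivity
      have := hy.out; linarith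
    have := hf.2 hxn hyn ha hb hab
    simp only [smul_eq_mul] at this
    have heq : a * (x + 1/(n+1:ℝ)) + b * (y + 1/(n+1:ℝ)) = a * x + b * y + 1/(n+1) := by
      linear_combination (1/(n+1:ℝ)) * hab
    rwa [heq] at this
  have hL : Filter.Tendsto (fun n : ℕ => f (a * x + b * y + 1/(n+1)))
      Filter.atTop (nhds (f (a * x + b * y))) := by
    refine key _ ?_
    have := hx.out; have := hy.out
    positivity
  have hR : Filter.Tendsto (fun n : ℕ => a * f (x + 1/(n+1)) + b * f (y + 1/(n+1)))
      Filter.atTop (nhds (a * f x + b * f y)) :=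
    ((key x hx.out).const_mul a).add ((key y hy.out).const_mul b)
  exact le_of_tendsto_of_tendsto' hL hR hn

/-- The perspective function `g s a = s f(a/s)` (with `g 0 a = 0`) is jointly convex
on nonnegative pairs with `s = 0 → a = 0`. -/
lemma aux_perspective {f : ℝ → ℝ} (hf : ConvexOn ℝ (Set.Ici (0:ℝ)) f)
    {s₁ s₂ a₁ a₂ t u : ℝ}
    (hs₁ : 0 ≤ s₁) (hs₂ : 0 ≤ s₂) (ha₁ : 0 ≤ a₁) (ha₂ : 0 ≤ a₂)
    (hz₁ : s₁ = 0 → a₁ = 0) (hz₂ : s₂ = 0 → a₂ = 0)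
    (ht : 0 ≤ t) (hu : 0 ≤ u) (htu : t + u = 1) :
    (if t*s₁+u*s₂ = 0 then 0 else (t*s₁+u*s₂) * f ((t*a₁+u*a₂)/(t*s₁+u*s₂)))
      ≤ t * (if s₁ = 0 then 0 else s₁ * f (a₁/s₁))
        + u * (if s₂ = 0 then 0 else s₂ * f (a₂/s₂)) := by
  set S := t*s₁ + u*s₂ with hS
  have hS0 : 0 ≤ S := by positivity
  rcases eq_or_lt_of_le hS0 with h0 | h0
  · -- S = 0 : both weighted terms vanish
    rw [if_pos h0.symm]
    have h1 : t * (if s₁ = 0 then 0 else s₁ * f (a₁/s₁)) = 0 := by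
      rcases eq_or_lt_of_le ht with h | h
      · rw [← h]; ring
      · have hts : t * s₁ = 0 := by nlinarith [mul_nonneg ht hs₁, mul_nonneg hu hs₂]
        have : s₁ = 0 := by
          rcases mul_eq_zero.mp hts with h' | h'
          · exact absurd h' (ne_of_gt h)
          · exact h'
        rw [if_pos this]; ring
    have h2 : u * (if s₂ = 0 then 0 else s₂ * f (a₂/s₂)) = 0 := by
      rcases eq_or_lt_of_le hu with h | h
      · rw [← h]; ring
      · have hus : u * s₂ = 0 := by nlinarith [mul_nonneg ht hs₁, mul_nonneg hu hs₂]
        have : s₂ = 0 := by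
          rcases mul_eq_zero.mp hus with h' | h'
          · exact absurd h' (ne_of_gt h)
          · exact h'
        rw [if_pos this]; ring
    rw [h1, h2]; norm_num
  · -- S > 0
    rw [if_neg (ne_of_gt h0)]
    set r₁ := a₁ / s₁ with hr₁
    set r₂ := a₂ / s₂ with hr₂
    have hr₁0 : (0:ℝ) ≤ r₁ := div_nonneg ha₁ hs₁
    have hr₂0 : (0:ℝ) ≤ r₂ := div_nonneg ha₂ hs₂
    have hl : 0 ≤ t * s₁ / S := by positivity
    have hm : 0 ≤ u * s₂ / S := by positivity
    have hsum : t * s₁ / S + u * s₂ / S = 1 := by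
      field_simp
      exact hS.symm
    have ha₁' : t * a₁ = t * s₁ * r₁ := by
      rcases eq_or_ne s₁ 0 with h | h
      · rw [h, hz₁ h]; ring
      · rw [hr₁]; field_simp
    have ha₂' : u * a₂ = u * s₂ * r₂ := by
      rcases eq_or_ne s₂ 0 with h | h
      · rw [h, hz₂ h]; ring
      · rw [hr₂]; field_simp
    have hA : (t*a₁+u*a₂)/S = (t * s₁ / S) * r₁ + (u * s₂ / S) * r₂ := by
      rw [ha₁', ha₂']; ring
    have hconv := hf.2 (Set.mem_Ici.mpr hr₁0) (Set.mem_Ici.mpr hr₂0) hl hm hsum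
    simp only [smul_eq_mul] at hconv
    rw [← hA] at hconv
    have hmain : S * f ((t*a₁+u*a₂)/S) ≤ t * s₁ * f r₁ + u * s₂ * f r₂ := by
      have := mul_le_mul_of_nonneg_left hconv (le_of_lt h0)
      calc S * f ((t*a₁+u*a₂)/S)
          ≤ S * (t * s₁ / S * f r₁ + u * s₂ / S * f r₂) := this
        _ = t * s₁ * f r₁ + u * s₂ * f r₂ := by field_simp
    refine hmain.trans (le_of_eq ?_)
    congr 1
    · rcases eq_or_ne s₁ 0 with h | h
      · rw [if_pos h, h]; ring
      · rw [if_neg h]; ring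
    · rcases eq_or_ne s₂ 0 with h | h
      · rw [if_pos h, h]; ring
      · rw [if_neg h]; ring

/-- The privacy cost `C(γ) = ∑ₓ ∑_y p₀(y) γ₁(x) f(γ(x,y)/(γ₁(x) p₀(y)))`. -/
noncomputable def privCost {X Y : Type*} [Fintype X] [Fintype Y]
    (p₀ : Y → ℝ) (f : ℝ → ℝ) (γ : X × Y → ℝ) : ℝ :=
  ∑ x : X, ∑ y : Y,
    if (∑ y' : Y, γ (x, y')) = 0 ∨ p₀ y = 0 then 0
    else p₀ y * (∑ y' : Y, γ (x, y')) *
      f (γ (x, y) / ((∑ y' : Y, γ (x, y')) * p₀ y))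

/-- The privacy cost is convex on the set of joint distributions with `Y`-marginal `p₀`. -/
theorem privCost_convexOn {X Y : Type*} [Fintype X] [Fintype Y]
    (p₀ : Y → ℝ) (hp₀ : ∀ y, 0 ≤ p₀ y) (hp₀1 : ∑ y : Y, p₀ y = 1)
    (f : ℝ → ℝ) (hf : ConvexOn ℝ (Set.Ioi (0 : ℝ)) f) (hf1 : f 1 = 0)
    (hf0 : Filter.Tendsto f (nhdsWithin 0 (Set.Ioi 0)) (nhds (f 0))) :
    ConvexOn ℝ
      {γ : X × Y → ℝ | (∀ p, 0 ≤ γ p) ∧ (∑ p : X × Y, γ p = 1) ∧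
        ∀ y, ∑ x : X, γ (x, y) = p₀ y}
      (privCost p₀ f) := by
  have hfI : ConvexOn ℝ (Set.Ici (0:ℝ)) f := aux_convexOn_Ici hf hf0
  constructor
  · -- the set is convex
    intro γ hγ μ hμ t u ht hu htu
    refine ⟨fun p => ?_, ?_, fun y => ?_⟩
    · have := hγ.1 p; have := hμ.1 p
      simp only [Pi.add_apply, Pi.smul_apply, smul_eq_mul]
      positivity
    · simp only [Pi.add_apply, Pi.smul_apply, smul_eq_mul]
      rw [Finset.sum_add_distrib, ← Finset.mul_sum, ← Finset.mul_sum,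
        hγ.2.1, hμ.2.1]
      linarith
    · simp only [Pi.add_apply, Pi.smul_apply, smul_eq_mul]
      rw [Finset.sum_add_distrib, ← Finset.mul_sum, ← Finset.mul_sum,
        hγ.2.2 y, hμ.2.2 y]
      nlinarith [hp₀ y]
  · intro γ hγ μ hμ t u ht hu htu
    simp only [smul_eq_mul]
    unfold privCost
    rw [Finset.mul_sum, Finset.mul_sum, ← Finset.sum_add_distrib]
    refine Finset.sum_le_sum fun x _ => ?_
    rw [Finset.mul_sum, Finset.mul_sum, ← Finset.sum_add_distrib]
    refine Finset.sum_le_sum fun y _ => ?_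
    simp only [Pi.add_apply, Pi.smul_apply, smul_eq_mul]
    have hsum : (∑ y' : Y, (t * γ (x, y') + u * μ (x, y'))) =
        t * (∑ y' : Y, γ (x, y')) + u * (∑ y' : Y, μ (x, y')) := by
      rw [Finset.sum_add_distrib, ← Finset.mul_sum, ← Finset.mul_sum]
    rw [hsum]
    set sγ := ∑ y' : Y, γ (x, y') with hsγ
    set sμ := ∑ y' : Y, μ (x, y') with hsμ
    have hsγ0 : 0 ≤ sγ := Finset.sum_nonneg fun y' _ => hγ.1 _
    have hsμ0 : 0 ≤ sμ := Finset.sum_nonneg fun y' _ => hμ.1 _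
    rcases eq_or_lt_of_le (hp₀ y) with hpy | hpy
    · -- p₀ y = 0 : everything vanishes
      simp only [← hpy, or_true, if_pos]
      norm_num
    · -- p₀ y > 0
      have hpy' : p₀ y ≠ 0 := ne_of_gt hpy
      have key := aux_perspective hfI hsγ0 hsμ0
        (div_nonneg (hγ.1 (x, y)) (le_of_lt hpy))
        (div_nonneg (hμ.1 (x, y)) (le_of_lt hpy))
        (fun h => by
          have := (Finset.sum_eq_zero_iff_of_nonneg
            (fun y' _ => hγ.1 (x, y'))).mp (hsγ ▸ h) y (Finset.mem_univ y)
          rw [this]; simp)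
        (fun h => by
          have := (Finset.sum_eq_zero_iff_of_nonneg
            (fun y' _ => hμ.1 (x, y'))).mp (hsμ ▸ h) y (Finset.mem_univ y)
          rw [this]; simp)
        ht hu htu
      have e1 : ∀ (s : ℝ) (a : ℝ),
          (if s = 0 ∨ p₀ y = 0 then 0 else p₀ y * s * f (a / (s * p₀ y)))
          = p₀ y * (if s = 0 then 0 else s * f ((a / p₀ y) / s)) := by
        intro s a
        rcases eq_or_ne s 0 with h | h
        · rw [if_pos (Or.inl h), if_pos h]; ring
        · rw [if_neg (by tauto), if_neg h]
          rw [div_div, mul_comm s (p₀ y), mul_comm (p₀ y) s]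
          ring
      rw [e1, e1, e1]
      have e2 : t * γ (x, y) + u * μ (x, y) =
          (t * (γ (x, y) / p₀ y) + u * (μ (x, y) / p₀ y)) * p₀ y := by
        field_simp
      have e3 : (t * γ (x, y) + u * μ (x, y)) / p₀ y =
          t * (γ (x, y) / p₀ y) + u * (μ (x, y) / p₀ y) := by
        rw [e2, mul_div_assoc, div_self hpy', mul_one]
      rw [e3]
      calc p₀ y * (if t * sγ + u * sμ = 0 then 0
            else (t * sγ + u * sμ) *
              f ((t * (γ (x, y) / p₀ y) + u * (μ (x, y) / p₀ y)) / (t * sγ + u * sμ)))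
          ≤ p₀ y * (t * (if sγ = 0 then 0 else sγ * f (γ (x, y) / p₀ y / sγ))
              + u * (if sμ = 0 then 0 else sμ * f (μ (x, y) / p₀ y / sμ))) :=
            mul_le_mul_of_nonneg_left key (le_of_lt hpy)
        _ = t * (p₀ y * (if sγ = 0 then 0 else sγ * f (γ (x, y) / p₀ y / sγ)))
              + u * (p₀ y * (if sμ = 0 then 0 else sμ * f (μ (x, y) / p₀ y / sμ))) := by
            ring
end
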